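/- Let F ⊆ ℝ² be a nonempty bounded open set and D ⊆ ℝ³ a bounded measurable set. Let ω⁰ ≠ 0 and let Φ⁰ : ℝ³ → ℝ, ξ⁰ : ℝ² → ℝ be C¹ functions satisfying the zero-order (Steklov) system in weak form: (K⁰) ∫_D ⟨∇Φ⁰(x), ∇f(x)⟩ dx = ω⁰ ∫_F ξ⁰(p) f(p,0) dp for every C¹ f : ℝ³ → ℝ, and (D⁰) ∫_F ξ⁰(p) g(p) dp = ω⁰ ∫_F Φ⁰(p,0) g(p) dp for every C¹ g : ℝ² → ℝ. Let ω¹ ∈ ℝ and C¹ functions Φ¹ : ℝ³ → ℝ, ξ¹ : ℝ² → ℝ satisfy the first-order system in weak form: (K¹) ∫_D ⟨∇Φ¹(x), ∇f(x)⟩ dx = ∫_F (ω⁰ ξ¹(p) + ω¹ ξ⁰(p)) f(p,0) dp for every C¹ f, and (D¹) ∫_F (ξ¹(p) g(p) + ⟨∇ξ⁰(p), ∇g(p)⟩) dp = ∫_F (ω⁰ Φ¹(p,0) + ω¹ Φ⁰(p,0)) g(p) dp for every C¹ g. If ∫_F Φ⁰(p,0)² dp ≠ 0, then ω¹ = (ω⁰/2)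 · (∫_F ‖∇(p ↦ Φ⁰(p,0))(p)‖² dp) / (∫_F Φ⁰(p,0)² dp). -/

import Mathlib

open MeasureTheory RealInnerProductSpace

noncomputable section

abbrev E2 : Type := EuclideanSpace ℝ (Fin 2)
abbrev E3 : Type := EuclideanSpace ℝ (Fin 3)

/-- Embedding of the free surface plane: `p = (x,y) ↦ (x,y,0)`. -/
def emb (p : E2) : E3 := (WithLp.equiv 2 (Fin 3 → ℝ)).symm ![p 0, p 1, 0]

/-- Dirichlet energy `D[Φ] = (1/2)∫_D ‖∇Φ‖²`. -/
def Dir (D : Set E3) (Φ : E3 → ℝ) : ℝ := (1/2) * ∫ x in D, ‖gradient Φ x‖^2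

/-- Free surface energy `S[ξ] = (1/2)∫_F (ξ² + Bo⁻¹‖∇ξ‖²)`. -/
def Surf (F : Set E2) (Bo : ℝ) (ξ : E2 → ℝ) : ℝ :=
  (1/2) * ∫ p in F, (ξ p ^ 2 + Bo⁻¹ * ‖gradient ξ p‖^2)

/-- The pairing `⟨Φ,ξ⟩_F = ∫_F Φ(x,y,0) ξ(x,y)`. -/
def pairF (F : Set E2) (Φ : E3 → ℝ) (ξ : E2 → ℝ) : ℝ := ∫ p in F, Φ (emb p) * ξ p

/-- `(ω,Φ,ξ)` is a weak solution of the sloshing problem with surface tension. -/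
def IsWeakSol (D : Set E3) (F : Set E2) (Bo ω : ℝ) (Φ : E3 → ℝ) (ξ : E2 → ℝ) : Prop :=
  ContDiff ℝ 1 Φ ∧ ContDiff ℝ 1 ξ ∧
  (∀ f : E3 → ℝ, ContDiff ℝ 1 f →
    (∫ x in D, ⟪gradient Φ x, gradient f x⟫) = ω * ∫ p in F, ξ p * f (emb p)) ∧
  (∀ g : E2 → ℝ, ContDiff ℝ 1 g →
    (∫ p in F, (ξ p * g p + Bo⁻¹ * ⟪gradient ξ p, gradient g p⟫))
      = ω * ∫ p in F, Φ (emb p) * g p)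

/-- The admissible class `𝒜`: pairs of C¹ functions with zero mean over `F`. -/
def Adm (F : Set E2) (Φ : E3 → ℝ) (ξ : E2 → ℝ) : Prop :=
  ContDiff ℝ 1 Φ ∧ ContDiff ℝ 1 ξ ∧
  (∫ p in F, Φ (emb p)) = 0 ∧ (∫ p in F, ξ p) = 0

section Aux

lemma emb_contDiff : ContDiff ℝ 1 emb := by
  have h : ContDiff ℝ 1 fun p : E2 => ![p 0, p 1, (0:ℝ)] := by
    apply contDiff_pi.2
    intro i
    fin_cases i
    · exact (EuclideanSpace.proj (0:Fin 2) : E2 →L[ℝ] ℝ).contDiff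
    · exact (EuclideanSpace.proj (1:Fin 2) : E2 →L[ℝ] ℝ).contDiff
    · exact contDiff_const
  exact ((EuclideanSpace.equiv (Fin 3) ℝ).symm.contDiff).comp h

lemma gradient_congr_nhds {f g : E2 → ℝ} {x : E2} (h : f =ᶠ[nhds x] g) :
    gradient f x = gradient g x := by
  unfold gradient
  rw [h.fderiv_eq]

lemma gradient_const_mul' {f : E2 → ℝ} {x : E2} (c : ℝ) (hf : DifferentiableAt ℝ f x) :
    gradient (fun y => c * f y) x = c • gradient f x := by
  unfold gradient
  rw [fderiv_const_mul hf]
  simp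

lemma intOn {F : Set E2} (hFb : Bornology.IsBounded F) {f : E2 → ℝ} (hf : Continuous f) :
    IntegrableOn f F :=
  (hf.continuousOn.integrableOn_compact hFb.isCompact_closure).mono_set subset_closure

lemma grad_cont {f : E2 → ℝ} (hf : ContDiff ℝ 1 f) : Continuous (gradient f) := by
  unfold gradient
  exact (InnerProductSpace.toDual ℝ E2).symm.continuous.comp (hf.continuous_fderiv one_ne_zero)

/-- Fundamental lemma of the calculus of variations on an open set. -/
lemma vanish_on_open {F : Set E2} (hFopen : IsOpen F) {h : E2 → ℝ} (hc : Continuous h)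
    (hint : ∀ g : E2 → ℝ, ContDiff ℝ 1 g → (∫ p in F, g p * h p) = 0) :
    ∀ p ∈ F, h p = 0 := by
  have hae : ∀ᵐ x : E2, x ∈ F → h x = 0 := by
    apply hFopen.ae_eq_zero_of_integral_contDiff_smul_eq_zero
      (hc.locallyIntegrable.locallyIntegrableOn F)
    intro g hg hgs hsupp
    have h1 : ∫ x, g x • h x = ∫ x in F, g x • h x := by
      rw [setIntegral_eq_integral_of_forall_compl_eq_zero]
      intro x hx
      have hg0 : g x = 0 := by
        by_contra hgx
        exact hx (hsupp (subset_tsupport g hgx))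
      simp [hg0]
    rw [h1]
    simpa [smul_eq_mul] using hint g (hg.of_le (by exact_mod_cast le_top))
  intro p hp
  by_contra hne
  have h2 : ∀ᶠ x in nhds p, x ∈ F ∧ h x ≠ 0 :=
    (hFopen.eventually_mem hp).and (hc.continuousAt.eventually_ne hne)
  obtain ⟨ε, hε, hball⟩ := Metric.eventually_nhds_iff_ball.1 h2
  have h0 : volume (Metric.ball p ε) = 0 := by
    apply measure_mono_null _ (ae_iff.1 hae)
    intro x hx
    have := hball x hx
    simp only [Set.mem_setOf_eq, Classical.not_imp]
    exact this
  exact absurd h0 (Metric.measure_ball_pos volume p hε).ne'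

end Aux

/-- Theorem 5.2. First-order perturbation formula for a simple
eigenvalue in the inverse Bond number `ε = Bo⁻¹`:
`ω¹ = (ω⁰/2)·‖∇_F Φ⁰‖²_{L²(F)}/‖Φ⁰‖²_{L²(F)}`. -/
theorem first_order_perturbation
    (D : Set E3) (F : Set E2)
    (hD : Bornology.IsBounded D)
    (hFopen : IsOpen F) (hFne : F.Nonempty) (hFb : Bornology.IsBounded F)
    (hDm : MeasurableSet D)
    (ω0 : ℝ) (hω0 : ω0 ≠ 0)
    (Φ0 : E3 → ℝ) (ξ0 : E2 → ℝ)
    (hΦ0 : ContDiff ℝ 1 Φ0) (hξ0 : ContDiff ℝ 1 ξ0)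
    (hK0 : ∀ f : E3 → ℝ, ContDiff ℝ 1 f →
      (∫ x in D, ⟪gradient Φ0 x, gradient f x⟫) = ω0 * ∫ p in F, ξ0 p * f (emb p))
    (hD0 : ∀ g : E2 → ℝ, ContDiff ℝ 1 g →
      (∫ p in F, ξ0 p * g p) = ω0 * ∫ p in F, Φ0 (emb p) * g p)
    (ω1 : ℝ) (Φ1 : E3 → ℝ) (ξ1 : E2 → ℝ)
    (hΦ1 : ContDiff ℝ 1 Φ1) (hξ1 : ContDiff ℝ 1 ξ1)
    (hK1 : ∀ f : E3 → ℝ, ContDiff ℝ 1 f →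
      (∫ x in D, ⟪gradient Φ1 x, gradient f x⟫)
        = ∫ p in F, (ω0 * ξ1 p + ω1 * ξ0 p) * f (emb p))
    (hD1 : ∀ g : E2 → ℝ, ContDiff ℝ 1 g →
      (∫ p in F, (ξ1 p * g p + ⟪gradient ξ0 p, gradient g p⟫))
        = ∫ p in F, (ω0 * Φ1 (emb p) + ω1 * Φ0 (emb p)) * g p)
    (hL2 : (∫ p in F, Φ0 (emb p) ^ 2) ≠ 0) :
    ω1 = (ω0 / 2) * (∫ p in F, ‖gradient (fun q : E2 => Φ0 (emb q)) p‖ ^ 2)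
      / ∫ p in F, Φ0 (emb p) ^ 2 := by
  have hFm : MeasurableSet F := hFopen.measurableSet
  have hu : ContDiff ℝ 1 fun q : E2 => Φ0 (emb q) := hΦ0.comp emb_contDiff
  have hΦ1e : ContDiff ℝ 1 fun p : E2 => Φ1 (emb p) := hΦ1.comp emb_contDiff
  have hcu : Continuous fun q : E2 => Φ0 (emb q) := hu.continuous
  have hcΦ1e : Continuous fun p : E2 => Φ1 (emb p) := hΦ1e.continuous
  have hcξ0 : Continuous ξ0 := hξ0.continuous
  have hcξ1 : Continuous ξ1 := hξ1.continuous
  have hgu : Continuous (gradient fun q : E2 => Φ0 (emb q)) := grad_cont hu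
  -- Step 1: ξ0 = ω0·Φ0∘emb on F.
  have hkey : ∀ p ∈ F, ξ0 p = ω0 * Φ0 (emb p) := by
    have hv : ∀ p ∈ F, ξ0 p - ω0 * Φ0 (emb p) = 0 := by
      apply vanish_on_open hFopen (hcξ0.sub (continuous_const.mul hcu))
      intro g hg
      have e : (fun p => g p * (ξ0 p - ω0 * Φ0 (emb p)))
          = fun p => ξ0 p * g p - ω0 * (Φ0 (emb p) * g p) := by
        funext p; ring
      show (∫ p in F, g p * (ξ0 p - ω0 * Φ0 (emb p))) = 0
      rw [e, integral_sub (f := fun p => ξ0 p * g p) (g := fun p => ω0 * (Φ0 (emb p) * g p)) (intOn hFb (hcξ0.mul hg.continuous))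
        (intOn hFb (continuous_const.mul (hcu.mul hg.continuous))), integral_const_mul,
        hD0 g hg]
      ring
    intro p hp
    have := hv p hp
    linarith
  -- Step 2: ∇ξ0 = ω0·∇(Φ0∘emb) on F.
  have hgrad : ∀ p ∈ F, gradient ξ0 p = ω0 • gradient (fun q : E2 => Φ0 (emb q)) p := by
    intro p hp
    have hev : ξ0 =ᶠ[nhds p] fun q => ω0 * Φ0 (emb q) := by
      filter_upwards [hFopen.eventually_mem hp] with q hq using hkey q hq
    rw [gradient_congr_nhds hev, gradient_const_mul' ω0 ((hu.differentiable one_ne_zero) p)]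
  -- Step 3: symmetry of the Dirichlet form.
  have hsym : (∫ x in D, ⟪gradient Φ1 x, gradient Φ0 x⟫)
      = ∫ x in D, ⟪gradient Φ0 x, gradient Φ1 x⟫ := by
    simp_rw [real_inner_comm]
  have hD0' := hD0 (fun p => Φ1 (emb p)) hΦ1e
  have h4 : (∫ p in F, (ω0 * ξ1 p + ω1 * ξ0 p) * Φ0 (emb p))
      = ω0 ^ 2 * ∫ p in F, Φ0 (emb p) * Φ1 (emb p) := by
    have hK1' := hK1 Φ0 hΦ0
    have hK0' := hK0 Φ1 hΦ1
    rw [← hK1', hsym, hK0', hD0']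
    ring
  have h4l : (∫ p in F, (ω0 * ξ1 p + ω1 * ξ0 p) * Φ0 (emb p))
      = ω0 * (∫ p in F, ξ1 p * Φ0 (emb p)) + ω1 * ω0 * ∫ p in F, Φ0 (emb p) ^ 2 := by
    have e : Set.EqOn (fun p => (ω0 * ξ1 p + ω1 * ξ0 p) * Φ0 (emb p))
        (fun p => ω0 * (ξ1 p * Φ0 (emb p)) + ω1 * ω0 * Φ0 (emb p) ^ 2) F := by
      intro p hp
      simp only
      rw [hkey p hp]; ring
    rw [setIntegral_congr_fun hFm e,
      integral_add (f := fun p => ω0 * (ξ1 p * Φ0 (emb p))) (g := fun p => ω1 * ω0 * Φ0 (emb p) ^ 2) (intOn hFb (continuous_const.mul (hcξ1.mul hcu)))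
        (intOn hFb (continuous_const.mul (hcu.pow 2))),
      integral_const_mul, integral_const_mul]
  have hX : ω0 * (∫ p in F, ξ1 p * Φ0 (emb p)) + ω1 * ω0 * (∫ p in F, Φ0 (emb p) ^ 2)
      = ω0 ^ 2 * ∫ p in F, Φ0 (emb p) * Φ1 (emb p) := by
    rw [← h4l]; exact h4
  -- Step 4: first-order dynamic condition tested against Φ0∘emb.
  have h5 := hD1 (fun q => Φ0 (emb q)) hu
  have h5l : (∫ p in F, (ξ1 p * Φ0 (emb p)
        + ⟪gradient ξ0 p, gradient (fun q : E2 => Φ0 (emb q)) p⟫))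
      = (∫ p in F, ξ1 p * Φ0 (emb p))
        + ω0 * ∫ p in F, ‖gradient (fun q : E2 => Φ0 (emb q)) p‖ ^ 2 := by
    have e : Set.EqOn
        (fun p => ξ1 p * Φ0 (emb p)
          + ⟪gradient ξ0 p, gradient (fun q : E2 => Φ0 (emb q)) p⟫)
        (fun p => ξ1 p * Φ0 (emb p)
          + ω0 * ‖gradient (fun q : E2 => Φ0 (emb q)) p‖ ^ 2) F := by
      intro p hp
      simp only
      rw [hgrad p hp, real_inner_smul_left, real_inner_self_eq_norm_sq]
    rw [setIntegral_congr_fun hFm e,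
      integral_add (f := fun p => ξ1 p * Φ0 (emb p)) (g := fun p => ω0 * ‖gradient (fun q : E2 => Φ0 (emb q)) p‖ ^ 2) (intOn hFb (hcξ1.mul hcu))
        (intOn hFb (continuous_const.mul (hgu.norm.pow 2))),
      integral_const_mul]
  have h5r : (∫ p in F, (ω0 * Φ1 (emb p) + ω1 * Φ0 (emb p)) * Φ0 (emb p))
      = ω0 * (∫ p in F, Φ0 (emb p) * Φ1 (emb p)) + ω1 * ∫ p in F, Φ0 (emb p) ^ 2 := by
    have e : (fun p : E2 => (ω0 * Φ1 (emb p) + ω1 * Φ0 (emb p)) * Φ0 (emb p))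
        = fun p => ω0 * (Φ0 (emb p) * Φ1 (emb p)) + ω1 * Φ0 (emb p) ^ 2 := by
      funext p; ring
    rw [e, integral_add (f := fun p => ω0 * (Φ0 (emb p) * Φ1 (emb p))) (g := fun p => ω1 * Φ0 (emb p) ^ 2) (intOn hFb (continuous_const.mul (hcu.mul hcΦ1e)))
        (intOn hFb (continuous_const.mul (hcu.pow 2))),
      integral_const_mul, integral_const_mul]
  rw [h5l, h5r] at h5
  -- Step 5: conclude.
  have key : ω0 * (ω0 * ∫ p in F, ‖gradient (fun q : E2 => Φ0 (emb q)) p‖ ^ 2)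
      = ω0 * (2 * ω1 * ∫ p in F, Φ0 (emb p) ^ 2) := by
    linear_combination ω0 * h5 - hX
  have key2 : ω0 * (∫ p in F, ‖gradient (fun q : E2 => Φ0 (emb q)) p‖ ^ 2)
      = 2 * ω1 * ∫ p in F, Φ0 (emb p) ^ 2 := mul_left_cancel₀ hω0 key
  rw [eq_div_iff hL2]
  linear_combination -key2 / 2
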